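/- Under the dual-certificate conditions, the weighted atomic norm minimizer is unique: suppose the atoms a_M(f_1),…,a_M(f_s) restricted to the sample set M are linearly independent, and there exists q supported on M with Q(f_j) = w(f_j)·sign(c_j) for all true frequencies f_j and |Q(f)| < w(f) for all f ∉ {f_1,…,f_s}, where Q(f) = ⟨q, a(f)⟩ and w is a positive piecewise-constant weight function. Then any representation x̂ = Σ_j c_j′ e^{i2πf_j′l} (l ∈ M) agreeing with x on M and attaining the same weighted coefficient sum Σ w(f_j′)|c_j′| = Σ w(f_j)|c_j| must use exactly the frequencies {f_1,…,f_s} with the same coefficients c_j. -/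

import Mathlib

open Real

theorem stmt_12 (n s : ℕ) (M : Finset (Fin n)) (f : Fin s → ℝ) (c : Fin s → ℂ)
    (hf : Function.Injective f) (hf1 : ∀ j, f j ∈ Set.Icc (0 : ℝ) 1)
    (hc : ∀ j, c j ≠ 0)
    (w : ℝ → ℝ) (hw : ∀ g, 0 < w g)
    (hind : LinearIndependent ℂ
      (fun (j : Fin s) => fun (l : {l // l ∈ M}) =>
        Complex.exp (Complex.I * (2 * π * f j * ((l : Fin n) : ℕ)))))
    (q : Fin n → ℂ) (hq : ∀ l ∉ M, q l = 0)
    (Q : ℝ → ℂ)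
    (hQ : Q = fun (g : ℝ) => ∑ l ∈ M, q l * Complex.exp (-Complex.I * (2 * π * g * (l : ℕ))))
    (hsign : ∀ j, Q (f j) = (w (f j) : ℂ) * (c j / (‖c j‖ : ℂ)))
    (hlt : ∀ g ∈ Set.Icc (0 : ℝ) 1, g ∉ Set.range f → ‖Q g‖ < w g)
    (s' : ℕ) (f' : Fin s' → ℝ) (c' : Fin s' → ℂ)
    (hf' : Function.Injective f') (hf'1 : ∀ j, f' j ∈ Set.Icc (0 : ℝ) 1)
    (hc' : ∀ j, c' j ≠ 0)
    (hagree : ∀ l ∈ M,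
      ∑ j, c' j * Complex.exp (Complex.I * (2 * π * f' j * (l : ℕ))) =
      ∑ j, c j * Complex.exp (Complex.I * (2 * π * f j * (l : ℕ))))
    (hsum : ∑ j, w (f' j) * ‖c' j‖ = ∑ j, w (f j) * ‖c j‖) :
    ∃ e : Fin s' ≃ Fin s, ∀ j, f' j = f (e j) ∧ c' j = c (e j) := by
  classical
  -- pairing identity
  have pair : ∀ (m : ℕ) (F : Fin m → ℝ) (C : Fin m → ℂ),
      ∑ j, (starRingEnd ℂ) (C j) * Q (F j) =
      ∑ l ∈ M, q l * (starRingEnd ℂ)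
        (∑ j, C j * Complex.exp (Complex.I * (2 * π * F j * (l : ℕ)))) := by
    intro m F C
    rw [hQ]
    simp only [Finset.mul_sum, map_sum]
    rw [Finset.sum_comm]
    refine Finset.sum_congr rfl fun l _ => Finset.sum_congr rfl fun j _ => ?_
    rw [map_mul, ← Complex.exp_conj]
    simp only [map_mul, Complex.conj_I, Complex.conj_ofReal, map_ofNat, map_natCast]
    ring
  have hTT : ∑ j, (starRingEnd ℂ) (c' j) * Q (f' j)
      = ∑ j, (starRingEnd ℂ) (c j) * Q (f j) := by
    rw [pair, pair]
    exact Finset.sum_congr rfl fun l hl => by rw [hagree l hl]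
  -- value of the pairing with the true signal
  have hT : ∑ j, (starRingEnd ℂ) (c j) * Q (f j)
      = ((∑ j, w (f j) * ‖c j‖ : ℝ) : ℂ) := by
    push_cast
    refine Finset.sum_congr rfl fun j _ => ?_
    rw [hsign j]
    have h1 : (‖c j‖ : ℂ) ≠ 0 := by
      simpa using norm_ne_zero_iff.mpr (hc j)
    have h2 : (starRingEnd ℂ) (c j) * c j = ((‖c j‖ : ℝ) : ℂ) ^ 2 := by
      rw [mul_comm, Complex.mul_conj, Complex.normSq_eq_norm_sq]
      push_cast; ring
    field_simp
    linear_combination (w (f j) : ℂ) * h2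
  -- |Q| ≤ w everywhere on the recovered frequencies
  have hQle : ∀ j, ‖Q (f' j)‖ ≤ w (f' j) := by
    intro j
    by_cases hr : f' j ∈ Set.range f
    · obtain ⟨k, hk⟩ := hr
      rw [← hk, hsign k]
      have h1 : ‖c k‖ ≠ 0 := norm_ne_zero_iff.mpr (hc k)
      rw [norm_mul, norm_div]
      simp [Complex.norm_real, abs_of_pos (hw (f k)), div_self h1]
    · exact (hlt _ (hf'1 j) hr).le
  -- equality chain forces every f' j ∈ range f
  have hre : ∑ j, w (f' j) * ‖c' j‖
      = (∑ j, (starRingEnd ℂ) (c' j) * Q (f' j)).re := by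
    rw [hTT, hT, hsum, Complex.ofReal_re]
  have hle1 : (∑ j, (starRingEnd ℂ) (c' j) * Q (f' j)).re
      ≤ ∑ j, ‖c' j‖ * ‖Q (f' j)‖ := by
    refine (Complex.re_le_norm _).trans ?_
    refine (norm_sum_le _ _).trans_eq ?_
    refine Finset.sum_congr rfl fun j _ => ?_
    rw [norm_mul, Complex.norm_conj]
  have hrange : ∀ j, f' j ∈ Set.range f := by
    intro j0
    by_contra hr
    have hterm : ∀ j ∈ Finset.univ, (0:ℝ) ≤ ‖c' j‖ * (w (f' j) - ‖Q (f' j)‖) :=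
      fun j _ => mul_nonneg (norm_nonneg _) (sub_nonneg.2 (hQle j))
    have hpos : 0 < ‖c' j0‖ * (w (f' j0) - ‖Q (f' j0)‖) :=
      mul_pos (norm_pos_iff.mpr (hc' j0)) (sub_pos.2 (hlt _ (hf'1 j0) hr))
    have hbig : ‖c' j0‖ * (w (f' j0) - ‖Q (f' j0)‖)
        ≤ ∑ j, ‖c' j‖ * (w (f' j) - ‖Q (f' j)‖) :=
      Finset.single_le_sum hterm (Finset.mem_univ j0)
    have hs : ∑ j, ‖c' j‖ * (w (f' j) - ‖Q (f' j)‖)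
        = (∑ j, w (f' j) * ‖c' j‖) - ∑ j, ‖c' j‖ * ‖Q (f' j)‖ := by
      rw [← Finset.sum_sub_distrib]
      exact Finset.sum_congr rfl fun j _ => by ring
    rw [hs, hre] at hbig
    have := hle1
    linarith
  choose g hg using hrange
  have hginj : Function.Injective g := fun j1 j2 h => hf' (by rw [← hg j1, ← hg j2, h])
  set d : Fin s → ℂ := fun k => (∑ j ∈ Finset.univ.filter (fun j => g j = k), c' j) - c k with hd
  have hdzero : ∀ k, d k = 0 := by
    refine Fintype.linearIndependent_iff.mp hind d ?_
    funext l
    simp only [Finset.sum_apply, Pi.smul_apply, smul_eq_mul, Pi.zero_apply]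
    have step1 : ∑ k, (∑ j ∈ Finset.univ.filter (fun j => g j = k), c' j)
          * Complex.exp (Complex.I * (2 * π * f k * ((l : Fin n) : ℕ)))
        = ∑ j, c' j * Complex.exp (Complex.I * (2 * π * f' j * ((l : Fin n) : ℕ))) := by
      rw [← Finset.sum_fiberwise Finset.univ g
        (fun j => c' j * Complex.exp (Complex.I * (2 * π * f' j * ((l : Fin n) : ℕ))))]
      refine Finset.sum_congr rfl fun k _ => ?_
      rw [Finset.sum_mul]
      refine Finset.sum_congr rfl fun j hj => ?_
      have hjk : g j = k := (Finset.mem_filter.mp hj).2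
      rw [← hjk, hg j]
    calc ∑ k, d k * Complex.exp (Complex.I * (2 * π * f k * ((l : Fin n) : ℕ)))
        = (∑ j, c' j * Complex.exp (Complex.I * (2 * π * f' j * ((l : Fin n) : ℕ))))
          - ∑ k, c k * Complex.exp (Complex.I * (2 * π * f k * ((l : Fin n) : ℕ))) := by
          rw [← step1, ← Finset.sum_sub_distrib]
          exact Finset.sum_congr rfl fun k _ => by rw [hd]; ring
      _ = 0 := by rw [hagree (l : Fin n) l.2]; ring
  have hsurj : Function.Surjective g := by
    intro k
    by_contra hk
    push_neg at hk
    have hflt : Finset.univ.filter (fun j => g j = k) = ∅ := by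
      refine Finset.filter_false_of_mem fun j _ => hk j
    have := hdzero k
    rw [hd] at this
    simp only [hflt, Finset.sum_empty, zero_sub, neg_eq_zero] at this
    exact hc k this
  have hcc : ∀ j, c' j = c (g j) := by
    intro j
    have hflt : Finset.univ.filter (fun j' => g j' = g j) = {j} := by
      ext j'
      simp [hginj.eq_iff]
    have := hdzero (g j)
    rw [hd] at this
    simp only [hflt, Finset.sum_singleton, sub_eq_zero] at this
    exact this
  exact ⟨Equiv.ofBijective g ⟨hginj, hsurj⟩, fun j => ⟨(hg j).symm, hcc j⟩⟩
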